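/- Under a balanced 2² completely randomized design (N₁ = N₂ = N₃ = N₄ = N/4), the sampling variance of τ̂_F simplifies to Var_CR(τ̂_F) = N⁻¹ Σ_{k=1}^4 S²(k,k) - N⁻¹ S²_F, where S²_F = (N-1)⁻¹ Σᵢ (τ_{i-F} - τ_F)² is the finite-population variance of the unit-level factorial effect. -/

import Mathlib

open Finset

def gA : Fin 4 → ℝ := ![-1, -1, 1, 1]
def gB : Fin 4 → ℝ := ![-1, 1, -1, 1]
def gAB : Fin 4 → ℝ := ![1, -1, -1, 1]


section aux
variable {N n : ℕ}

lemma comp_mem_A (A : Finset (Fin N → Fin 4))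
    (hA : A = Finset.univ.filter
      (fun T => ∀ j, (Finset.univ.filter (fun i => T i = j)).card = n))
    (σ : Equiv.Perm (Fin N)) {T : Fin N → Fin 4} (hT : T ∈ A) : T ∘ σ ∈ A := by
  subst hA
  simp only [mem_filter, mem_univ, true_and] at hT ⊢
  intro j
  rw [← hT j]
  apply Finset.card_bij (fun x _ => σ x)
  · intro a ha
    simp only [mem_filter, mem_univ, true_and, Function.comp_apply] at ha ⊢
    exact ha
  · intro a _ b _ h; exact σ.injective h
  · intro b hb
    refine ⟨σ.symm b, ?_, by simp⟩
    simp only [mem_filter, mem_univ, true_and, Function.comp_apply] at hb ⊢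
    simpa using hb

lemma single_count_eq (A : Finset (Fin N → Fin 4))
    (hA : A = Finset.univ.filter
      (fun T => ∀ j, (Finset.univ.filter (fun i => T i = j)).card = n))
    (k : Fin 4) (i i' : Fin N) :
    (A.filter (fun T => T i = k)).card = (A.filter (fun T => T i' = k)).card := by
  classical
  set σ : Equiv.Perm (Fin N) := Equiv.swap i i' with hσ
  symm
  apply Finset.card_bij (fun T _ => T ∘ σ)
  · intro T hT
    simp only [mem_filter] at hT ⊢
    exact ⟨comp_mem_A A hA σ hT.1, by simpa [hσ, Function.comp_apply] using hT.2⟩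
  · intro a _ b _ h
    funext x
    have := congrFun h (σ.symm x)
    simpa using this
  · intro T hT
    simp only [mem_filter] at hT
    refine ⟨T ∘ σ.symm, ?_, by funext x; simp⟩
    simp only [mem_filter]
    refine ⟨comp_mem_A A hA σ.symm hT.1, ?_⟩
    simpa [hσ, Function.comp_apply] using hT.2

lemma pair_count_eq (A : Finset (Fin N → Fin 4))
    (hA : A = Finset.univ.filter
      (fun T => ∀ j, (Finset.univ.filter (fun i => T i = j)).card = n))
    (k l : Fin 4) {i j i' j' : Fin N} (hij : i ≠ j) (hij' : i' ≠ j') :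
    (A.filter (fun T => T i = k ∧ T j = l)).card
      = (A.filter (fun T => T i' = k ∧ T j' = l)).card := by
  classical
  set σ1 : Equiv.Perm (Fin N) := Equiv.swap i i' with hσ1
  set j'' := σ1 j with hj''
  have h1 : σ1 i = i' := Equiv.swap_apply_left i i'
  have hji'' : j'' ≠ i' := by
    rw [hj'', ← h1]
    exact fun h => hij (σ1.injective h).symm
  set σ2 : Equiv.Perm (Fin N) := Equiv.swap j'' j' with hσ2
  set σ : Equiv.Perm (Fin N) := σ1.trans σ2 with hσ
  have hσi : σ i = i' := by
    simp only [hσ, Equiv.trans_apply, h1, hσ2]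
    exact Equiv.swap_apply_of_ne_of_ne hji''.symm hij'
  have hσj : σ j = j' := by
    simp only [hσ, Equiv.trans_apply, ← hj'', hσ2]
    exact Equiv.swap_apply_left j'' j'
  symm
  apply Finset.card_bij (fun T _ => T ∘ σ)
  · intro T hT
    simp only [mem_filter] at hT ⊢
    exact ⟨comp_mem_A A hA σ hT.1,
      by simpa [Function.comp_apply, hσi, hσj] using hT.2⟩
  · intro a _ b _ h
    funext x
    have := congrFun h (σ.symm x)
    simpa using this
  · intro T hT
    simp only [mem_filter] at hT
    refine ⟨T ∘ σ.symm, ?_, by funext x; simp⟩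
    simp only [mem_filter]
    refine ⟨comp_mem_A A hA σ.symm hT.1, ?_⟩
    have e1 : σ.symm i' = i := by rw [← hσi]; simp
    have e2 : σ.symm j' = j := by rw [← hσj]; simp
    exact ⟨by simp [Function.comp_apply, e1, hT.2.1],
      by simp [Function.comp_apply, e2, hT.2.2]⟩

end aux

section counts
variable {N n : ℕ}

lemma indicator_sum (A : Finset (Fin N → Fin 4))
    (hA : A = Finset.univ.filter
      (fun T => ∀ j, (Finset.univ.filter (fun i => T i = j)).card = n))
    {T : Fin N → Fin 4} (hT : T ∈ A) (m : Fin 4) :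
    ∑ x : Fin N, (if T x = m then (1:ℝ) else 0) = n := by
  rw [Finset.sum_boole]
  subst hA
  simp only [mem_filter, mem_univ, true_and] at hT
  rw [hT m]

lemma single_count_val (A : Finset (Fin N → Fin 4))
    (hA : A = Finset.univ.filter
      (fun T => ∀ j, (Finset.univ.filter (fun i => T i = j)).card = n))
    (k : Fin 4) (i : Fin N) :
    (N : ℝ) * ((A.filter fun T => T i = k).card : ℝ) = (n : ℝ) * (A.card : ℝ) := by
  have h1 : ∑ i' : Fin N, (((A.filter fun T => T i' = k).card : ℝ))
      = (N : ℝ) * ((A.filter fun T => T i = k).card : ℝ) := by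
    rw [Finset.sum_congr rfl (fun i' _ => by
      rw [single_count_eq A hA k i' i])]
    rw [Finset.sum_const, card_univ, Fintype.card_fin, nsmul_eq_mul]
  have h2 : ∑ i' : Fin N, (((A.filter fun T => T i' = k).card : ℝ))
      = (n : ℝ) * (A.card : ℝ) := by
    have : ∀ i' : Fin N, (((A.filter fun T => T i' = k).card : ℝ))
        = ∑ T ∈ A, (if T i' = k then (1:ℝ) else 0) := by
      intro i'; rw [Finset.sum_boole]
    rw [Finset.sum_congr rfl (fun i' _ => this i'), Finset.sum_comm]
    rw [Finset.sum_congr rfl (fun T hT => indicator_sum A hA hT k)]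
    rw [Finset.sum_const, nsmul_eq_mul]; ring
  rw [← h1, h2]

lemma pair_count_val (A : Finset (Fin N → Fin 4))
    (hA : A = Finset.univ.filter
      (fun T => ∀ j, (Finset.univ.filter (fun i => T i = j)).card = n))
    (k l : Fin 4) {i j : Fin N} (hij : i ≠ j) :
    (N : ℝ) * ((N : ℝ) - 1) * ((A.filter fun T => T i = k ∧ T j = l).card : ℝ)
      = (A.card : ℝ) * (n : ℝ) * ((n : ℝ) - if k = l then 1 else 0) := by
  have hN1 : 1 ≤ N := Nat.one_le_iff_ne_zero.mpr (by
    rintro rfl; exact absurd i.2 (by omega))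
  have hprod : ∀ (T : Fin N → Fin 4) (x : Fin N),
      (if T x = k then (1:ℝ) else 0) * (if T x = l then 1 else 0)
        = if k = l then (if T x = k then (1:ℝ) else 0) else 0 := by
    intro T x
    rcases eq_or_ne k l with h | h
    · subst h; by_cases h1 : T x = k <;> simp [h1]
    · by_cases h1 : T x = k
      · by_cases h2 : T x = l
        · exact absurd (h1.symm.trans h2) h
        · simp [h1, h2, h]
      · simp [h1, h]
  -- step 1 : double sum equals N(N-1) * c
  have step1 : ∑ i' : Fin N, ∑ j' ∈ univ.erase i',
      ((A.filter fun T => T i' = k ∧ T j' = l).card : ℝ)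
      = (N : ℝ) * ((N : ℝ) - 1) *
        ((A.filter fun T => T i = k ∧ T j = l).card : ℝ) := by
    have : ∀ i' : Fin N, ∀ j' ∈ univ.erase i',
        ((A.filter fun T => T i' = k ∧ T j' = l).card : ℝ)
          = ((A.filter fun T => T i = k ∧ T j = l).card : ℝ) := by
      intro i' j' hj'
      have hne : i' ≠ j' := (Finset.ne_of_mem_erase hj').symm
      rw [pair_count_eq A hA k l hne hij]
    rw [Finset.sum_congr rfl (fun i' _ => Finset.sum_congr rfl (this i'))]
    simp only [Finset.sum_const, Finset.card_erase_of_mem (Finset.mem_univ _),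
      card_univ, Fintype.card_fin, nsmul_eq_mul]
    have hcast : ((N - 1 : ℕ) : ℝ) = (N : ℝ) - 1 := by
      push_cast [hN1]; ring
    rw [hcast]; ring
  -- step 2 : double sum equals A.card * n * (n - δ)
  have step2 : ∑ i' : Fin N, ∑ j' ∈ univ.erase i',
      ((A.filter fun T => T i' = k ∧ T j' = l).card : ℝ)
      = (A.card : ℝ) * (n : ℝ) * ((n : ℝ) - if k = l then 1 else 0) := by
    have hc : ∀ (i' j' : Fin N), ((A.filter fun T => T i' = k ∧ T j' = l).card : ℝ)
        = ∑ T ∈ A, (if T i' = k then (1:ℝ) else 0) * (if T j' = l then 1 else 0) := by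
      intro i' j'
      rw [Finset.card_filter]
      push_cast
      apply Finset.sum_congr rfl
      intro T _
      by_cases h1 : T i' = k <;> by_cases h2 : T j' = l <;> simp [h1, h2]
    calc ∑ i' : Fin N, ∑ j' ∈ univ.erase i',
          ((A.filter fun T => T i' = k ∧ T j' = l).card : ℝ)
        = ∑ T ∈ A, ∑ i' : Fin N, ∑ j' ∈ univ.erase i',
            (if T i' = k then (1:ℝ) else 0) * (if T j' = l then 1 else 0) := by
          rw [Finset.sum_congr rfl (fun i' _ => Finset.sum_congr rfl
            (fun j' _ => hc i' j'))]
          rw [Finset.sum_congr rfl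
            (fun i' (_ : i' ∈ (univ : Finset (Fin N))) => (Finset.sum_comm :
              ∑ j' ∈ univ.erase i', ∑ T ∈ A,
                (if T i' = k then (1:ℝ) else 0) * (if T j' = l then 1 else 0)
              = ∑ T ∈ A, ∑ j' ∈ univ.erase i',
                (if T i' = k then (1:ℝ) else 0) * (if T j' = l then 1 else 0)))]
          exact Finset.sum_comm
      _ = ∑ T ∈ A, ((n : ℝ) * n - if k = l then (n:ℝ) else 0) := by
          apply Finset.sum_congr rfl
          intro T hT
          have hind := indicator_sum A hA hT
          have inner : ∀ i' : Fin N, ∑ j' ∈ univ.erase i',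
              (if T j' = l then (1:ℝ) else 0)
              = (n : ℝ) - (if T i' = l then (1:ℝ) else 0) := by
            intro i'
            rw [Finset.sum_erase_eq_sub (Finset.mem_univ i'), hind l]
          calc ∑ i' : Fin N, ∑ j' ∈ univ.erase i',
                (if T i' = k then (1:ℝ) else 0) * (if T j' = l then 1 else 0)
              = ∑ i' : Fin N, (if T i' = k then (1:ℝ) else 0) *
                  ((n : ℝ) - (if T i' = l then (1:ℝ) else 0)) := by
                apply Finset.sum_congr rfl
                intro i' _
                rw [← Finset.mul_sum, inner i']
            _ = (n:ℝ) * ∑ i' : Fin N, (if T i' = k then (1:ℝ) else 0)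
                - ∑ i' : Fin N, (if T i' = k then (1:ℝ) else 0) *
                    (if T i' = l then (1:ℝ) else 0) := by
                rw [Finset.mul_sum, ← Finset.sum_sub_distrib]
                apply Finset.sum_congr rfl
                intro i' _; ring
            _ = (n : ℝ) * n - (if k = l then (n:ℝ) else 0) := by
                rw [hind k]
                congr 1
                rw [Finset.sum_congr rfl (fun x _ => hprod T x)]
                rcases eq_or_ne k l with h | h
                · subst h
                  simp only [if_pos rfl]
                  exact hind k
                · simp [h]
      _ = (A.card : ℝ) * (n : ℝ) * ((n : ℝ) - if k = l then 1 else 0) := by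
          rw [Finset.sum_const, nsmul_eq_mul]
          rcases eq_or_ne k l with h | h <;> simp [h] <;> ring
  rw [← step1, step2]

end counts

set_option maxHeartbeats 2000000 in
theorem balanced_crd_variance
    (N n : ℕ) (hn : 0 < n) (hN : N = 4 * n) (Y : Fin N → Fin 4 → ℝ)
    (g : Fin 4 → ℝ) (hg : g ∈ ({gA, gB, gAB} : Set (Fin 4 → ℝ)))
    (A : Finset (Fin N → Fin 4))
    (hA : A = Finset.univ.filter
      (fun T => ∀ j, (Finset.univ.filter (fun i => T i = j)).card = n))
    (hAne : A.Nonempty) :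
    (A.card : ℝ)⁻¹ * ∑ T ∈ A,
        ((2⁻¹ * ∑ k, g k * ((n : ℝ)⁻¹ *
            ∑ i ∈ Finset.univ.filter (fun i => T i = k), Y i k))
          - 2⁻¹ * ∑ k, g k * ((N : ℝ)⁻¹ * ∑ i, Y i k)) ^ 2
      = (N : ℝ)⁻¹ * (∑ k, ((N : ℝ) - 1)⁻¹ * ∑ i,
            (Y i k - (N : ℝ)⁻¹ * ∑ i', Y i' k) ^ 2)
        - (N : ℝ)⁻¹ * (((N : ℝ) - 1)⁻¹ * ∑ i,
            ((2⁻¹ * ∑ k, g k * Y i k)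
              - (N : ℝ)⁻¹ * ∑ i', (2⁻¹ * ∑ k, g k * Y i' k)) ^ 2) := by
  classical
  simp only [Set.mem_insert_iff, Set.mem_singleton_iff] at hg
  have hg2 : ∀ k, g k * g k = 1 := by
    rcases hg with h | h | h <;> subst h <;> intro k <;> fin_cases k <;>
      norm_num [gA, gB, gAB]
  have hn' : (n : ℝ) ≠ 0 := Nat.cast_ne_zero.mpr hn.ne'
  have hN4 : (N : ℝ) = 4 * n := by rw [hN]; push_cast; ring
  have hNne : (N : ℝ) ≠ 0 := by rw [hN4]; positivity
  have hge4 : (4 : ℝ) ≤ (N : ℝ) := by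
    rw [hN4]
    have h1 : (1 : ℝ) ≤ n := by exact_mod_cast hn
    linarith
  have hN1ne : (N : ℝ) - 1 ≠ 0 := by linarith
  have ha : (A.card : ℝ) ≠ 0 := Nat.cast_ne_zero.mpr hAne.card_pos.ne'
  set yc : Fin N → Fin 4 → ℝ := fun i k => Y i k - (N : ℝ)⁻¹ * ∑ i', Y i' k
    with hyc
  have hycsum : ∀ k, ∑ i, yc i k = 0 := by
    intro k
    simp only [hyc]
    rw [Finset.sum_sub_distrib, Finset.sum_const, card_univ, Fintype.card_fin,
      nsmul_eq_mul]
    field_simp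
    ring
  set S1 : ℝ := ∑ k, ∑ i, yc i k ^ 2 with hS1
  set S2 : ℝ := ∑ i, (∑ k, g k * yc i k) ^ 2 with hS2
  set a : ℝ := (A.card : ℝ) with haa
  set NN1 : ℝ := (N : ℝ) * ((N : ℝ) - 1) with hNN1
  have hNN1ne : NN1 ≠ 0 := mul_ne_zero hNne hN1ne
  -- RHS simplification
  have hRHS2 : ∀ i : Fin N,
      (2⁻¹ * ∑ k, g k * Y i k) - (N : ℝ)⁻¹ * ∑ i', (2⁻¹ * ∑ k, g k * Y i' k)
        = 2⁻¹ * ∑ k, g k * yc i k := by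
    intro i
    have hsw : ∑ i', (2⁻¹ * ∑ k, g k * Y i' k)
        = 2⁻¹ * ∑ k, g k * ∑ i', Y i' k := by
      rw [← Finset.mul_sum, Finset.sum_comm]
      congr 1
      exact Finset.sum_congr rfl (fun k _ => (Finset.mul_sum _ _ _).symm)
    rw [hsw]
    simp only [hyc]
    rw [show ∑ k, g k * (Y i k - (N : ℝ)⁻¹ * ∑ i', Y i' k)
        = ∑ k, (g k * Y i k - (N : ℝ)⁻¹ * (g k * ∑ i', Y i' k)) from
      Finset.sum_congr rfl (fun k _ => by ring)]
    rw [Finset.sum_sub_distrib, ← Finset.mul_sum]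
    ring
  have hRHS : (N : ℝ)⁻¹ * (∑ k, ((N : ℝ) - 1)⁻¹ * ∑ i,
            (Y i k - (N : ℝ)⁻¹ * ∑ i', Y i' k) ^ 2)
        - (N : ℝ)⁻¹ * (((N : ℝ) - 1)⁻¹ * ∑ i,
            ((2⁻¹ * ∑ k, g k * Y i k)
              - (N : ℝ)⁻¹ * ∑ i', (2⁻¹ * ∑ k, g k * Y i' k)) ^ 2)
      = NN1⁻¹ * S1 - NN1⁻¹ * 4⁻¹ * S2 := by
    have e1 : ∑ k, ((N : ℝ) - 1)⁻¹ * ∑ i,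
        (Y i k - (N : ℝ)⁻¹ * ∑ i', Y i' k) ^ 2 = ((N : ℝ) - 1)⁻¹ * S1 := by
      rw [hS1, Finset.mul_sum]
    have e2 : ∑ i, ((2⁻¹ * ∑ k, g k * Y i k)
          - (N : ℝ)⁻¹ * ∑ i', (2⁻¹ * ∑ k, g k * Y i' k)) ^ 2
        = 4⁻¹ * S2 := by
      have e2' : ∀ i : Fin N, ((2⁻¹ * ∑ k, g k * Y i k)
            - (N : ℝ)⁻¹ * ∑ i', (2⁻¹ * ∑ k, g k * Y i' k)) ^ 2
          = 4⁻¹ * (∑ k, g k * yc i k) ^ 2 := by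
        intro i
        rw [hRHS2 i]
        ring
      rw [Finset.sum_congr rfl (fun i _ => e2' i), ← Finset.mul_sum, ← hS2]
    rw [e1, e2, hNN1]
    field_simp
  rw [hRHS]
  -- LHS per-assignment simplification
  have hcard : ∀ T ∈ A, ∀ m : Fin 4,
      ((univ.filter (fun i => T i = m)).card : ℝ) = n := by
    intro T hT m
    rw [hA] at hT
    simp only [mem_filter, mem_univ, true_and] at hT
    rw [hT m]
  have hL : ∀ T ∈ A,
      (2⁻¹ * ∑ k, g k * ((n : ℝ)⁻¹ *
            ∑ i ∈ Finset.univ.filter (fun i => T i = k), Y i k))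
          - 2⁻¹ * ∑ k, g k * ((N : ℝ)⁻¹ * ∑ i, Y i k)
        = 2⁻¹ * (n : ℝ)⁻¹ * ∑ k, g k * ∑ i, (if T i = k then yc i k else 0) := by
    intro T hT
    have key : ∀ k : Fin 4,
        g k * ((n : ℝ)⁻¹ * ∑ i ∈ Finset.univ.filter (fun i => T i = k), Y i k)
          = (n : ℝ)⁻¹ * (g k * ∑ i, (if T i = k then yc i k else 0))
            + g k * ((N : ℝ)⁻¹ * ∑ i, Y i k) := by
      intro k
      have hfY : ∑ i ∈ Finset.univ.filter (fun i => T i = k), Y i k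
          = (∑ i, (if T i = k then yc i k else 0))
            + (n : ℝ) * ((N : ℝ)⁻¹ * ∑ i, Y i k) := by
        have h2 : ∑ i ∈ Finset.univ.filter (fun i => T i = k), yc i k
            = ∑ i ∈ Finset.univ.filter (fun i => T i = k), Y i k
              - ((univ.filter (fun i => T i = k)).card : ℝ)
                * ((N : ℝ)⁻¹ * ∑ i', Y i' k) := by
          simp only [hyc]
          rw [Finset.sum_sub_distrib, Finset.sum_const, nsmul_eq_mul]
        rw [← Finset.sum_filter, h2, hcard T hT k]
        ring
      rw [hfY]
      field_simp
    rw [Finset.sum_congr rfl (fun k _ => key k), Finset.sum_add_distrib,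
      ← Finset.mul_sum]
    ring
  rw [Finset.sum_congr rfl (fun T hT => by rw [hL T hT])]
  -- expand the square
  set v : Fin 4 × Fin N → ℝ := fun p => g p.1 * yc p.2 p.1 with hv
  have hWp : ∀ T : Fin N → Fin 4,
      ∑ k, g k * ∑ i, (if T i = k then yc i k else 0)
        = ∑ p : Fin 4 × Fin N, (if T p.2 = p.1 then v p else 0) := by
    intro T
    rw [Fintype.sum_prod_type]
    apply Finset.sum_congr rfl
    intro k _
    rw [Finset.mul_sum]
    apply Finset.sum_congr rfl
    intro i _
    simp only [hv, mul_ite, mul_zero]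
  have expand : ∑ T ∈ A,
      (2⁻¹ * (n : ℝ)⁻¹ * ∑ k, g k * ∑ i, (if T i = k then yc i k else 0)) ^ 2
      = 4⁻¹ * ((n : ℝ)⁻¹) ^ 2 * ∑ p : Fin 4 × Fin N, ∑ q : Fin 4 × Fin N,
          v p * v q
            * ((A.filter (fun T => T p.2 = p.1 ∧ T q.2 = q.1)).card : ℝ) := by
    have e1 : ∀ T : Fin N → Fin 4,
        (2⁻¹ * (n : ℝ)⁻¹ * ∑ k, g k * ∑ i, (if T i = k then yc i k else 0)) ^ 2
        = 4⁻¹ * ((n : ℝ)⁻¹) ^ 2 * ∑ p : Fin 4 × Fin N, ∑ q : Fin 4 × Fin N,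
            (if T p.2 = p.1 then v p else 0) * (if T q.2 = q.1 then v q else 0) := by
      intro T
      rw [hWp T, ← Finset.sum_mul_sum]
      ring
    rw [Finset.sum_congr rfl (fun T _ => e1 T), ← Finset.mul_sum]
    congr 1
    rw [Finset.sum_comm]
    apply Finset.sum_congr rfl
    intro p _
    rw [Finset.sum_comm]
    apply Finset.sum_congr rfl
    intro q _
    have e2 : ∀ T : Fin N → Fin 4,
        (if T p.2 = p.1 then v p else 0) * (if T q.2 = q.1 then v q else 0)
          = if (T p.2 = p.1 ∧ T q.2 = q.1) then v p * v q else 0 := by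
      intro T
      by_cases h1 : T p.2 = p.1 <;> by_cases h2 : T q.2 = q.1 <;> simp [h1, h2]
    rw [Finset.sum_congr rfl (fun T _ => e2 T), ← Finset.sum_filter,
      Finset.sum_const, nsmul_eq_mul]
    ring
  rw [expand]
  -- the count formula
  set β : Fin 4 → Fin 4 → ℝ :=
    fun k l => a * n * ((n : ℝ) - if k = l then 1 else 0) / NN1 with hβ
  set γ : Fin 4 → Fin 4 → ℝ :=
    fun k l => (if k = l then a / 4 else 0) - β k l with hγ
  have hcR : ∀ p q : Fin 4 × Fin N,
      ((A.filter (fun T => T p.2 = p.1 ∧ T q.2 = q.1)).card : ℝ)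
        = β p.1 q.1 + (if p.2 = q.2 then γ p.1 q.1 else 0) := by
    intro p q
    by_cases hpq : p.2 = q.2
    · rw [if_pos hpq]
      simp only [hγ]
      by_cases hkl : p.1 = q.1
      · have hfil : (A.filter (fun T => T p.2 = p.1 ∧ T q.2 = q.1))
            = A.filter (fun T => T p.2 = p.1) := by
          apply Finset.filter_congr
          intro T _
          rw [← hpq, ← hkl, and_self]
        rw [hfil]
        have hval := single_count_val A hA p.1 p.2
        have hc4 : ((A.filter (fun T => T p.2 = p.1)).card : ℝ) = a / 4 := by
          have h4 : (n : ℝ) * (4 * ((A.filter (fun T => T p.2 = p.1)).card : ℝ))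
              = (n : ℝ) * a := by
            rw [haa, ← hval, hN4]; ring
          have h5 := mul_left_cancel₀ hn' h4
          linarith
        rw [hc4, if_pos hkl]
        ring
      · have hfil : (A.filter (fun T => T p.2 = p.1 ∧ T q.2 = q.1)) = ∅ := by
          apply Finset.filter_eq_empty_iff.mpr
          intro T _
          rintro ⟨h1, h2⟩
          rw [hpq] at h1
          exact hkl (h1.symm.trans h2)
        rw [hfil, if_neg hkl]
        simp
    · rw [if_neg hpq, add_zero]
      simp only [hβ]
      have hval := pair_count_val A hA p.1 q.1 hpq
      rw [eq_div_iff hNN1ne, hNN1]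
      rw [haa]
      linear_combination hval
  rw [Finset.sum_congr rfl (fun p _ => Finset.sum_congr rfl
    (fun q _ => by rw [hcR p q]))]
  -- split into the β part (zero) and the γ part
  have split : ∑ p : Fin 4 × Fin N, ∑ q : Fin 4 × Fin N,
      v p * v q * (β p.1 q.1 + if p.2 = q.2 then γ p.1 q.1 else 0)
      = (∑ p : Fin 4 × Fin N, ∑ q : Fin 4 × Fin N, v p * v q * β p.1 q.1)
        + ∑ p : Fin 4 × Fin N, ∑ q : Fin 4 × Fin N,
            v p * v q * (if p.2 = q.2 then γ p.1 q.1 else 0) := by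
    rw [← Finset.sum_add_distrib]
    apply Finset.sum_congr rfl
    intro p _
    rw [← Finset.sum_add_distrib]
    apply Finset.sum_congr rfl
    intro q _
    ring
  have hβzero : ∀ p : Fin 4 × Fin N,
      ∑ q : Fin 4 × Fin N, v p * v q * β p.1 q.1 = 0 := by
    intro p
    rw [Fintype.sum_prod_type]
    apply Finset.sum_eq_zero
    intro l _
    have e : ∑ j, v p * v (l, j) * β p.1 l
        = (v p * g l * β p.1 l) * ∑ j, yc j l := by
      rw [Finset.mul_sum]
      apply Finset.sum_congr rfl
      intro j _
      simp only [hv]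
      ring
    rw [e, hycsum l, mul_zero]
  have hite : ∑ p : Fin 4 × Fin N, ∑ q : Fin 4 × Fin N,
      v p * v q * (if p.2 = q.2 then γ p.1 q.1 else 0)
      = ∑ p : Fin 4 × Fin N, ∑ l, v p * v (l, p.2) * γ p.1 l := by
    apply Finset.sum_congr rfl
    intro p _
    rw [Fintype.sum_prod_type]
    apply Finset.sum_congr rfl
    intro l _
    have e : ∀ j : Fin N, v p * v (l, j) * (if p.2 = j then γ p.1 l else 0)
        = if p.2 = j then v p * v (l, j) * γ p.1 l else 0 := by
      intro j
      split_ifs <;> ring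
    rw [Finset.sum_congr rfl (fun j _ => e j), Finset.sum_ite_eq,
      if_pos (Finset.mem_univ _)]
  have hγval : ∀ k l, γ k l
      = -(a * n * n / NN1) + (if k = l then (a / 4 + a * n / NN1) else 0) := by
    intro k l
    simp only [hγ, hβ]
    split_ifs with h
    · field_simp
      ring
    · field_simp
      ring
  have hfinal : ∑ p : Fin 4 × Fin N, ∑ l, v p * v (l, p.2) * γ p.1 l
      = -(a * n * n / NN1) * S2 + (a / 4 + a * n / NN1) * S1 := by
    have per : ∀ p : Fin 4 × Fin N, ∑ l, v p * v (l, p.2) * γ p.1 l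
        = -(a * n * n / NN1) * (v p * ∑ l, v (l, p.2))
          + (a / 4 + a * n / NN1) * (v p * v p) := by
      intro p
      rw [Finset.sum_congr rfl (fun l _ => by rw [hγval p.1 l])]
      have pt : ∀ l : Fin 4, v p * v (l, p.2)
            * (-(a * n * n / NN1) + (if p.1 = l then (a / 4 + a * n / NN1) else 0))
          = -(a * n * n / NN1) * (v p * v (l, p.2))
            + (if p.1 = l then v p * v (l, p.2) * (a / 4 + a * n / NN1) else 0) := by
        intro l
        split_ifs <;> ring
      rw [Finset.sum_congr rfl (fun l _ => pt l), Finset.sum_add_distrib,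
        Finset.sum_ite_eq, if_pos (Finset.mem_univ _), ← Finset.mul_sum,
        ← Finset.mul_sum]
      have hvv : v (p.1, p.2) = v p := rfl
      rw [hvv]
      ring
    rw [Finset.sum_congr rfl (fun p _ => per p), Finset.sum_add_distrib,
      ← Finset.mul_sum, ← Finset.mul_sum]
    congr 1
    · congr 1
      rw [Fintype.sum_prod_type, Finset.sum_comm, hS2]
      apply Finset.sum_congr rfl
      intro i _
      show ∑ x : Fin 4, v (x, i) * ∑ l : Fin 4, v (l, i)
        = (∑ k, g k * yc i k) ^ 2
      rw [sq, ← Finset.sum_mul]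
    · congr 1
      rw [Fintype.sum_prod_type, hS1]
      apply Finset.sum_congr rfl
      intro k _
      apply Finset.sum_congr rfl
      intro i _
      have : v (k, i) * v (k, i) = (g k * g k) * (yc i k * yc i k) := by
        simp only [hv]
        ring
      rw [this, hg2 k]
      ring
  rw [split, Finset.sum_eq_zero (fun p _ => hβzero p), zero_add, hite, hfinal]
  -- final coefficient computation
  rw [hNN1, hN4]
  have h4n1 : (4 : ℝ) * n - 1 ≠ 0 := by rw [hN4] at hN1ne; exact hN1ne
  field_simp
  ring
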